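/- There exists a unique α₀ ∈ (0,1) satisfying arctanh(√(1−α₀)) = 3√(1−α₀)/(2 − 3α₀); moreover α₀ < 2/3 (so the right-hand side is positive) and α₀ is approximately 0.121. -/

import Mathlib

/-- The inverse hyperbolic tangent. -/
noncomputable def artanh (x : ℝ) : ℝ := Real.log ((1 + x) / (1 - x)) / 2

noncomputable def hfun (t : ℝ) : ℝ :=
  (Real.log (1 + t) - Real.log (1 - t)) / 2 - 3 * t / (3 * t ^ 2 - 1)

lemma artanh_eq {t : ℝ} (h1 : 0 < 1 + t) (h2 : 0 < 1 - t) :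
    artanh t = (Real.log (1 + t) - Real.log (1 - t)) / 2 := by
  unfold artanh
  rw [Real.log_div (ne_of_gt h1) (ne_of_gt h2)]

lemma hfun_hasDerivAt {t : ℝ} (h1 : 0 < 1 + t) (h2 : 0 < 1 - t) (h3 : 3 * t ^ 2 - 1 ≠ 0) :
    HasDerivAt hfun
      ((1/(1+t) + 1/(1-t))/2 + (9*t^2+3)/(3*t^2-1)^2) t := by
  have d1 : HasDerivAt (fun t : ℝ => Real.log (1 + t)) (1/(1+t)) t := by
    have h := (Real.hasDerivAt_log (ne_of_gt h1)).comp t ((hasDerivAt_id t).const_add 1)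
    simpa [one_div, Function.comp_def] using h
  have d2 : HasDerivAt (fun t : ℝ => Real.log (1 - t)) (-(1/(1-t))) t := by
    have h := (Real.hasDerivAt_log (ne_of_gt h2)).comp t ((hasDerivAt_id t).const_sub 1)
    simpa [one_div, Function.comp_def] using h
  have d3 : HasDerivAt (fun t : ℝ => 3 * t / (3 * t ^ 2 - 1))
      ((3 * (3 * t ^ 2 - 1) - 3 * t * (6 * t)) / (3 * t ^ 2 - 1) ^ 2) t := by
    have dn : HasDerivAt (fun t : ℝ => 3 * t) 3 t := by
      simpa using (hasDerivAt_id t).const_mul (3:ℝ)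
    have dd : HasDerivAt (fun t : ℝ => 3 * t ^ 2 - 1) (6 * t) t := by
      have := ((hasDerivAt_pow 2 t).const_mul (3:ℝ)).sub_const 1
      simpa using this.congr_deriv (by ring)
    exact dn.div dd h3
  have := ((d1.sub d2).div_const 2).sub d3
  refine this.congr_deriv ?_
  have h3' : (3 * t ^ 2 - 1) ^ 2 ≠ 0 := pow_ne_zero _ h3
  field_simp
  ring

lemma side_conds {t : ℝ} (ht : t ∈ Set.Ioo (Real.sqrt 3 / 3) 1) :
    0 < 1 + t ∧ 0 < 1 - t ∧ 0 < 3 * t ^ 2 - 1 := by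
  obtain ⟨hl, hr⟩ := ht
  have ha : (0:ℝ) ≤ Real.sqrt 3 / 3 := by positivity
  have hsq : (Real.sqrt 3 / 3) ^ 2 = 1 / 3 := by
    rw [div_pow, Real.sq_sqrt (by norm_num : (0:ℝ) ≤ 3)]; norm_num
  have h2 : (1:ℝ)/3 < t ^ 2 := by
    calc (1:ℝ)/3 = (Real.sqrt 3 / 3)^2 := hsq.symm
    _ < t ^ 2 := by nlinarith
  refine ⟨by nlinarith, by linarith, by linarith⟩

lemma log_lower {x : ℝ} (hx : 0 < x) : 1 - 1/x ≤ Real.log x := by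
  have h := Real.log_le_sub_one_of_pos (show 0 < 1/x by positivity)
  rw [Real.log_div one_ne_zero (ne_of_gt hx)] at h
  simp at h
  rw [one_div]
  linarith

lemma hfun_pos : 0 < hfun (938/1000) := by
  unfold hfun
  have e1 : Real.log (1 + 938/1000) - Real.log (1 - 938/1000) = Real.log (969/31) := by
    rw [← Real.log_div (by norm_num) (by norm_num)]
    norm_num
  rw [e1]
  have e2 : Real.log (969/31) = 5 * Real.log 2 + Real.log (969/992) := by
    rw [show (969/31 : ℝ) = 2^5 * (969/992) by norm_num,
      Real.log_mul (by norm_num) (by norm_num), Real.log_pow]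
    norm_num
  have hb : (1:ℝ) - 992/969 ≤ Real.log (969/992) := by
    have := log_lower (show (0:ℝ) < 969/992 by norm_num)
    convert this using 2
    norm_num
  have h2 := Real.log_two_gt_d9
  rw [e2]
  norm_num
  nlinarith

lemma hfun_neg : hfun (9371/10000) < 0 := by
  unfold hfun
  have e1 : Real.log (1 + 9371/10000) - Real.log (1 - 9371/10000) = Real.log (19371/629) := by
    rw [← Real.log_div (by norm_num) (by norm_num)]
    norm_num
  rw [e1]
  have e2 : Real.log (19371/629) = 5 * Real.log 2 + Real.log (19371/20128) := by
    rw [show (19371/629 : ℝ) = 2^5 * (19371/20128) by norm_num,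
      Real.log_mul (by norm_num) (by norm_num), Real.log_pow]
    norm_num
  have hb := Real.log_le_sub_one_of_pos (show (0:ℝ) < 19371/20128 by norm_num)
  have h2 := Real.log_two_lt_d9
  rw [e2]
  norm_num
  nlinarith

lemma hfun_mono : StrictMonoOn hfun (Set.Ioo (Real.sqrt 3 / 3) 1) := by
  apply strictMonoOn_of_deriv_pos (convex_Ioo _ _)
  · intro t ht
    obtain ⟨h1, h2, h3⟩ := side_conds ht
    exact (hfun_hasDerivAt h1 h2 (ne_of_gt h3)).continuousAt.continuousWithinAt
  · intro t ht
    rw [interior_Ioo] at ht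
    obtain ⟨h1, h2, h3⟩ := side_conds ht
    rw [(hfun_hasDerivAt h1 h2 (ne_of_gt h3)).deriv]
    positivity

lemma sqrt3_small : Real.sqrt 3 / 3 < 9371/10000 := by
  have h : Real.sqrt 3 < 2 := by
    nlinarith [Real.sq_sqrt (by norm_num : (3:ℝ) ≥ 0), Real.sqrt_nonneg 3]
  linarith

lemma Icc_sub : Set.Icc (9371/10000 : ℝ) (938/1000) ⊆ Set.Ioo (Real.sqrt 3 / 3) 1 := by
  intro x hx
  obtain ⟨h1, h2⟩ := hx
  exact ⟨lt_of_lt_of_le sqrt3_small h1, by norm_num at h2 ⊢; linarith⟩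

lemma exists_t0 : ∃ t₀ ∈ Set.Ioo (9371/10000 : ℝ) (938/1000), hfun t₀ = 0 := by
  have hc : ContinuousOn hfun (Set.Icc (9371/10000 : ℝ) (938/1000)) := by
    intro t ht
    obtain ⟨h1, h2, h3⟩ := side_conds (Icc_sub ht)
    exact (hfun_hasDerivAt h1 h2 (ne_of_gt h3)).continuousAt.continuousWithinAt
  have := intermediate_value_Ioo (by norm_num : (9371/10000 : ℝ) ≤ 938/1000) hc
  have h0 : (0:ℝ) ∈ Set.Ioo (hfun (9371/10000)) (hfun (938/1000)) := ⟨hfun_neg, hfun_pos⟩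
  obtain ⟨t₀, ht₀, ht₀0⟩ := this h0
  exact ⟨t₀, ht₀, ht₀0⟩

/-- uniqueness: any solution α equals 1 - t₀ ^ 2 -/
lemma key {t₀ : ℝ} (ht₀S : t₀ ∈ Set.Ioo (Real.sqrt 3 / 3) 1) (ht₀ : hfun t₀ = 0)
    {α : ℝ} (hα : α ∈ Set.Ioo (0:ℝ) 1)
    (heq : artanh (Real.sqrt (1 - α)) = 3 * Real.sqrt (1 - α) / (2 - 3 * α)) :
    α = 1 - t₀ ^ 2 := by
  obtain ⟨hα0, hα1⟩ := hα
  set t := Real.sqrt (1 - α) with htdef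
  have htpos : 0 < t := Real.sqrt_pos.mpr (by linarith)
  have htsq : t ^ 2 = 1 - α := Real.sq_sqrt (by linarith)
  have htlt1 : t < 1 := by
    nlinarith [htsq]
  -- artanh t > 0
  have hlog : 0 < artanh t := by
    rw [artanh_eq (by linarith) (by linarith)]
    have : Real.log (1 - t) < Real.log (1 + t) :=
      Real.log_lt_log (by linarith) (by linarith)
    linarith
  -- α < 2/3
  have hα23 : α < 2/3 := by
    by_contra hcon
    push_neg at hcon
    have hden : 2 - 3 * α ≤ 0 := by linarith
    have : 3 * t / (2 - 3 * α) ≤ 0 :=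
      div_nonpos_of_nonneg_of_nonpos (by linarith) hden
    linarith [heq ▸ hlog]
  have hden : 0 < 3 * t ^ 2 - 1 := by rw [htsq]; linarith
  -- t ∈ S
  have htS : t ∈ Set.Ioo (Real.sqrt 3 / 3) 1 := by
    refine ⟨?_, htlt1⟩
    have ha : (0:ℝ) ≤ Real.sqrt 3 / 3 := by positivity
    have hsq : (Real.sqrt 3 / 3) ^ 2 = 1 / 3 := by
      rw [div_pow, Real.sq_sqrt (by norm_num : (0:ℝ) ≤ 3)]; norm_num
    nlinarith
  -- hfun t = 0
  have hht : hfun t = 0 := by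
    unfold hfun
    rw [← artanh_eq (by linarith) (by linarith)]
    have h2 : 3 * t ^ 2 - 1 = 2 - 3 * α := by rw [htsq]; ring
    rw [h2, heq]
    ring
  have := hfun_mono.injOn htS ht₀S (by rw [hht, ht₀])
  rw [← this, htsq]
  ring

theorem stmt11 :
    (∃! α₀ : ℝ, α₀ ∈ Set.Ioo (0 : ℝ) 1 ∧
      artanh (Real.sqrt (1 - α₀)) = 3 * Real.sqrt (1 - α₀) / (2 - 3 * α₀)) ∧
    (∀ α₀ : ℝ, α₀ ∈ Set.Ioo (0 : ℝ) 1 →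
      artanh (Real.sqrt (1 - α₀)) = 3 * Real.sqrt (1 - α₀) / (2 - 3 * α₀) →
      α₀ < 2 / 3 ∧ |α₀ - 0.121| < 0.001) := by
  obtain ⟨t₀, ht₀mem, ht₀0⟩ := exists_t0
  obtain ⟨hL, hR⟩ := ht₀mem
  have ht₀S : t₀ ∈ Set.Ioo (Real.sqrt 3 / 3) 1 :=
    Icc_sub ⟨le_of_lt hL, le_of_lt hR⟩
  have ht₀pos : 0 < t₀ := by linarith [sqrt3_small]
  set α₀ := 1 - t₀ ^ 2 with hα₀def
  have hsq : Real.sqrt (1 - α₀) = t₀ := by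
    rw [hα₀def]
    simpa using Real.sqrt_sq ht₀pos.le
  have hb1 : (9371/10000 : ℝ)^2 < t₀^2 := by nlinarith
  have hb2 : t₀^2 < (938/1000 : ℝ)^2 := by nlinarith
  have hα₀mem : α₀ ∈ Set.Ioo (0:ℝ) 1 := by
    constructor
    · rw [hα₀def]; nlinarith
    · rw [hα₀def]; nlinarith
  have hα₀eq : artanh (Real.sqrt (1 - α₀)) = 3 * Real.sqrt (1 - α₀) / (2 - 3 * α₀) := by
    rw [hsq]
    have h2 : 2 - 3 * α₀ = 3 * t₀ ^ 2 - 1 := by rw [hα₀def]; ring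
    rw [h2]
    have h1 : 0 < 1 + t₀ := by linarith [ht₀S.2]
    have h2' : 0 < 1 - t₀ := by linarith [ht₀S.2]
    have := ht₀0
    unfold hfun at this
    rw [artanh_eq h1 h2']
    linarith
  constructor
  · refine ⟨α₀, ⟨hα₀mem, hα₀eq⟩, ?_⟩
    intro y hy
    exact key ht₀S ht₀0 hy.1 hy.2
  · intro α hα heq
    have hval := key ht₀S ht₀0 hα heq
    constructor
    · rw [hval, ← hα₀def]; nlinarith
    · rw [hval, ← hα₀def]
      rw [abs_lt]
      constructor <;> [nlinarith; nlinarith]
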